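/- There is no complete non-positively curved Ricci surface conformally equivalent to ℂ with exactly one catenoidal end: more precisely, there is no pair (g, η) on ℂP¹∖{0} with g meromorphic of the form g = z^{−n}·φ(z) (n ∈ ℕ*, φ meromorphic on ℂP¹, φ(0) ≠ 0) and η a meromorphic 1-form on ℂP¹, holomorphic and nonvanishing appropriately on ℂP¹∖{0}, such that the quadratic differential Q = dg⊗η is holomorphic on ℂP¹∖{0} with ord₀ Q = −2 and Q ≢ 0. The obstruction: ord₀ η = n − 1 ≥ 0 forces η to be a holomorphic 1-form on ℂP¹, hence η ≡ 0 and Q ≡ 0, a contradiction. -/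

import Mathlib

open Filter Complex

/-- There is no complete non-positively curved Ricci surface conformally `ℂ` with exactly
one catenoidal end: there is no Weierstrass pair `(g, η = α dz)` on `ℂP¹∖{0}` with
`g = z⁻ⁿ·φ` (`n ≥ 1`, `φ` meromorphic on the sphere, holomorphic at `0` with `φ(0) ≠ 0`),
`η` meromorphic on the sphere and holomorphic on `ℂP¹∖{0}` (in particular holomorphic at
`∞`, where the coefficient in the coordinate `w = 1/z` is `α(1/w)/w²`), such that the
Hopf differential `Q = dg⊗η` has `ord₀ Q = −2` (in particular `Q ≢ 0`). -/
theorem stmt6 :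
    ¬ ∃ (n : ℕ) (φ α g : ℂ → ℂ),
      0 < n ∧
      -- φ is meromorphic on the sphere, holomorphic and nonzero at 0
      MeromorphicOn φ Set.univ ∧ MeromorphicAt (fun w => φ (1 / w)) 0 ∧
      AnalyticAt ℂ φ 0 ∧ φ 0 ≠ 0 ∧
      -- g = z⁻ⁿ · φ
      (∀ z : ℂ, z ≠ 0 → g z = φ z / z ^ n) ∧
      -- η = α dz is holomorphic on ℂ∖{0} and at ∞
      AnalyticOnNhd ℂ α {z : ℂ | z ≠ 0} ∧
      AnalyticAt ℂ (fun w => α (1 / w) / w ^ 2) 0 ∧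
      -- Q = dg⊗η has a pole of order exactly 2 at 0
      (∃ h : ℂ → ℂ, AnalyticAt ℂ h 0 ∧ h 0 ≠ 0 ∧
        ∀ᶠ z in nhdsWithin (0 : ℂ) {(0 : ℂ)}ᶜ, deriv g z * α z = h z / z ^ 2) := by
  rintro ⟨n, φ, α, g, hn, -, -, hφa, hφ0, hg, hα, hAinf, h, hh, hh0, hq⟩
  obtain ⟨m, rfl⟩ : ∃ m, n = m + 1 := ⟨n - 1, (Nat.succ_pred_eq_of_pos hn).symm⟩
  set F : ℂ → ℂ := fun z => z ^ 2 * α z with hF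
  set D : ℂ → ℂ := fun z => z * deriv φ z - (m + 1 : ℂ) * φ z with hD
  have hD0 : D 0 ≠ 0 := by
    simp only [hD, zero_mul, zero_sub, neg_ne_zero]
    exact mul_ne_zero (Nat.cast_add_one_ne_zero m) hφ0
  have hφd : AnalyticAt ℂ (deriv φ) 0 := by
    rcases Filter.eventually_iff_exists_mem.mp hφa.eventually_analyticAt with ⟨s, hs, hsa⟩
    exact (AnalyticOnNhd.deriv (fun x hx => hsa x hx)) 0 (mem_of_mem_nhds hs)
  have hDa : AnalyticAt ℂ D 0 := by
    apply AnalyticAt.sub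
    · exact (analyticAt_id).mul hφd
    · exact analyticAt_const.mul hφa
  -- F eventually equals G near 0
  have key : ∀ᶠ z in nhdsWithin (0 : ℂ) {(0 : ℂ)}ᶜ,
      F z = h z * z ^ (m + 2) / D z := by
    have h1 : ∀ᶠ z in nhdsWithin (0 : ℂ) {(0 : ℂ)}ᶜ, AnalyticAt ℂ φ z :=
      nhdsWithin_le_nhds hφa.eventually_analyticAt
    have h2 : ∀ᶠ z in nhdsWithin (0 : ℂ) {(0 : ℂ)}ᶜ, D z ≠ 0 :=
      nhdsWithin_le_nhds (hDa.continuousAt.eventually_ne hD0)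
    have h3 : ∀ᶠ z in nhdsWithin (0 : ℂ) {(0 : ℂ)}ᶜ, z ≠ 0 :=
      eventually_mem_nhdsWithin
    filter_upwards [hq, h1, h2, h3] with z hqz hφz hDz hz
    -- compute deriv g z
    have hgz : deriv g z = D z / z ^ (m + 2) := by
      have he : g =ᶠ[nhds z] fun w => φ w / w ^ (m + 1) := by
        filter_upwards [isOpen_compl_singleton.mem_nhds hz] with w hw
        exact hg w hw
      rw [he.deriv_eq]
      rw [deriv_fun_div hφz.differentiableAt (differentiableAt_pow _) (pow_ne_zero _ hz)]
      rw [deriv_pow_field]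
      simp only [hD, Nat.add_sub_cancel, Nat.cast_add, Nat.cast_one]
      field_simp [hD]
      ring
    rw [hgz] at hqz
    simp only [hF]
    rw [eq_div_iff hDz]
    field_simp at hqz
    linear_combination hqz
  -- F is analytic at 0
  have hFa : AnalyticAt ℂ F 0 := by
    have hGa : AnalyticAt ℂ (fun z => h z * z ^ (m + 2) / D z) 0 :=
      (hh.mul (analyticAt_id.pow _)).div hDa hD0
    apply hGa.congr
    rw [Filter.eventuallyEq_iff_exists_mem]
    rw [← nhdsNE_sup_pure]
    rcases Filter.eventually_iff_exists_mem.mp key with ⟨s, hs, hsk⟩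
    refine ⟨s ∪ {0}, ?_, ?_⟩
    · rw [Filter.mem_sup]
      constructor
      · exact Filter.mem_of_superset hs Set.subset_union_left
      · simp
    · rintro z (hz | hz)
      · exact (hsk z hz).symm
      · simp only [Set.mem_singleton_iff] at hz
        subst hz
        simp [hF]
  -- F is entire
  have hFd : Differentiable ℂ F := by
    intro z
    rcases eq_or_ne z 0 with rfl | hz
    · exact hFa.differentiableAt
    · exact ((analyticAt_id.pow _).mul (hα z hz)).differentiableAt
  -- F is bounded
  have hFb : Bornology.IsBounded (Set.range F) := by
    set A : ℂ → ℂ := fun w => α (1 / w) / w ^ 2 with hA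
    have hAc : ContinuousAt A 0 := hAinf.continuousAt
    obtain ⟨δ, hδ, hball⟩ := Metric.continuousAt_iff.mp hAc 1 one_pos
    set C : ℝ := ‖A 0‖ + 1 with hC
    have hout : ∀ z : ℂ, δ⁻¹ < ‖z‖ → ‖F z‖ ≤ C := by
      intro z hz
      have hz0 : z ≠ 0 := by
        intro h0
        rw [h0, norm_zero] at hz
        exact absurd hz (not_lt.mpr (inv_nonneg.mpr hδ.le))
      have hzδ : dist ((1:ℂ)/z) 0 < δ := by
        rw [dist_zero_right, norm_div, norm_one, div_lt_iff₀ (norm_pos_iff.mpr hz0)]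
        calc 1 = δ * δ⁻¹ := (mul_inv_cancel₀ hδ.ne').symm
        _ < δ * ‖z‖ := (mul_lt_mul_iff_right₀ hδ).mpr hz
      have hFA : F z = A (1 / z) := by
        simp only [hA, one_div, inv_inv, hF]
        rw [inv_pow, div_eq_mul_inv, inv_inv]
        ring
      have := hball hzδ
      rw [dist_eq_norm] at this
      calc ‖F z‖ = ‖A 0 + (A (1/z) - A 0)‖ := by rw [hFA]; ring_nf
      _ ≤ ‖A 0‖ + ‖A (1/z) - A 0‖ := norm_add_le _ _
      _ ≤ ‖A 0‖ + 1 := by linarith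
    obtain ⟨C', hC'⟩ := (isCompact_closedBall (0:ℂ) δ⁻¹).exists_bound_of_continuousOn
      hFd.continuous.continuousOn
    rw [Metric.isBounded_iff_subset_closedBall 0]
    refine ⟨max C C', ?_⟩
    rintro - ⟨z, rfl⟩
    rw [Metric.mem_closedBall, dist_zero_right]
    rcases le_or_gt ‖z‖ δ⁻¹ with hle | hlt
    · exact le_trans (hC' z (by simpa [Metric.mem_closedBall, dist_zero_right] using hle))
        (le_max_right _ _)
    · exact le_trans (hout z hlt) (le_max_left _ _)
  -- Liouville: F is constant, equal to F 0 = 0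
  have hF0 : F 0 = 0 := by simp [hF]
  have hFzero : ∀ z, F z = 0 := fun z => by
    rw [← hF0]; exact hFd.apply_eq_apply_of_bounded hFb z 0
  -- hence α = 0 on ℂ∖{0}, hence h = 0 near 0, contradiction
  have hhz : ∀ᶠ z in nhdsWithin (0 : ℂ) {(0 : ℂ)}ᶜ, h z = 0 := by
    filter_upwards [hq, eventually_mem_nhdsWithin] with z hqz hz
    have hαz : α z = 0 := by
      have := hFzero z
      simp only [hF] at this
      rcases mul_eq_zero.mp this with h0 | h0
      · exact absurd (pow_eq_zero_iff (by norm_num) |>.mp h0) hz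
      · exact h0
    have : h z / z ^ 2 = 0 := by rw [← hqz, hαz, mul_zero]
    rcases div_eq_zero_iff.mp this with h0 | h0
    · exact h0
    · exact absurd (pow_eq_zero_iff (by norm_num) |>.mp h0) hz
  have : Filter.Tendsto h (nhdsWithin (0 : ℂ) {(0 : ℂ)}ᶜ) (nhds 0) :=
    Filter.Tendsto.congr' (Filter.EventuallyEq.symm hhz) tendsto_const_nhds
  have h00 : h 0 = 0 :=
    tendsto_nhds_unique
      (hh.continuousAt.continuousWithinAt.tendsto) this
  exact hh0 h00
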